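/- Let Δ ⊂ ℝ^d be a d-dimensional lattice polytope with Δ^{FI} = {0} and let Θ be a k-dimensional face of Δ such that [Θ*] is nonempty, where Θ* := {y ∈ Δ* : ⟨x,y⟩ = −1 for all x ∈ Θ}. Then [Θ*] is a face of the lattice polytope [Δ*] of dimension at most d−1−k. -/

import Mathlib

open Finset Pointwise MeasureTheory
noncomputable section

variable {d : ℕ}

/-- Standard pairing on ℝ^d. -/
def pairR (x y : Fin d → ℝ) : ℝ := ∑ i, x i * y i

/-- Embedding of ℤ^d into ℝ^d. -/
def toR (n : Fin d → ℤ) : Fin d → ℝ := fun i => (n i : ℝ)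

/-- A point of ℝ^d with integer coordinates. -/
def IsLatticePoint (x : Fin d → ℝ) : Prop := ∀ i, ∃ z : ℤ, x i = (z : ℝ)

/-- ord_Δ(y) = min_{x ∈ Δ} ⟨x, y⟩. -/
def ordP (Δ : Set (Fin d → ℝ)) (y : Fin d → ℝ) : ℝ := sInf ((fun x => pairR x y) '' Δ)

/-- The Fine interior of Δ. -/
def fineInterior (Δ : Set (Fin d → ℝ)) : Set (Fin d → ℝ) :=
  {x | ∀ n : Fin d → ℤ, n ≠ 0 → ordP Δ (toR n) + 1 ≤ pairR x (toR n)}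

/-- A lattice polytope: the convex hull of finitely many lattice points. -/
def IsLatticePolytope (Δ : Set (Fin d → ℝ)) : Prop :=
  ∃ S : Finset (Fin d → ℤ), Δ = convexHull ℝ (toR '' (S : Set (Fin d → ℤ)))

/-- The polar set Δ* = {y : ⟨x,y⟩ ≥ -1 for all x ∈ Δ}. -/
def polarSet (Δ : Set (Fin d → ℝ)) : Set (Fin d → ℝ) :=
  {y | ∀ x ∈ Δ, -1 ≤ pairR x y}

/-- [P] = convex hull of the lattice points of P. -/
def latticeHull (P : Set (Fin d → ℝ)) : Set (Fin d → ℝ) :=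
  convexHull ℝ {x ∈ P | IsLatticePoint x}

/-- Pseudoreflexive polytope: Fine interior {0} and Δ = [[Δ*]*]. -/
def IsPseudoreflexive (Δ : Set (Fin d → ℝ)) : Prop :=
  IsLatticePolytope Δ ∧ fineInterior Δ = {0} ∧
    Δ = latticeHull (polarSet (latticeHull (polarSet Δ)))

/-- (Exposed) face of Δ cut out by a supporting linear functional. -/
def IsFaceOf (Δ F : Set (Fin d → ℝ)) : Prop :=
  ∃ y : Fin d → ℝ, F = {x ∈ Δ | pairR x y = ordP Δ y}

/-- Dimension of a subset of ℝ^d. -/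
def dimSet (S : Set (Fin d → ℝ)) : ℕ := Module.finrank ℝ ↥(vectorSpan ℝ S)

/-- The face of the polar polytope dual to a face F of Δ. -/
def dualFace (Δ F : Set (Fin d → ℝ)) : Set (Fin d → ℝ) :=
  {y ∈ polarSet Δ | ∀ x ∈ F, pairR x y = -1}

/-- The cone ℝ_{≥0}·Θ over a set Θ. -/
def coneOver (Θ : Set (Fin d → ℝ)) : Set (Fin d → ℝ) :=
  {x | ∃ c : ℝ, 0 ≤ c ∧ ∃ p ∈ Θ, x = c • p}

/-- A face Θ is ordinary if every lattice point of ℝ_{≥0}Θ lies in some dilate lΘ. -/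
def IsOrdinaryFace (Θ : Set (Fin d → ℝ)) : Prop :=
  ∀ n : Fin d → ℤ, toR n ∈ coneOver Θ → ∃ l : ℕ, toR n ∈ (l : ℝ) • Θ

/-- Facet: a face of dimension d-1. -/
def IsFacet (Δ Θ : Set (Fin d → ℝ)) : Prop :=
  IsFaceOf Δ Θ ∧ dimSet Θ + 1 = d


lemma pairR_comm (x y : Fin d → ℝ) : pairR x y = pairR y x := by
  simp [pairR, mul_comm]

def pairLin (y : Fin d → ℝ) : (Fin d → ℝ) →ₗ[ℝ] ℝ where
  toFun x := pairR x y
  map_add' a b := by simp [pairR, add_mul, Finset.sum_add_distrib]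
  map_smul' c a := by simp [pairR, Finset.mul_sum, mul_assoc]

lemma pairLin_apply (y x : Fin d → ℝ) : pairLin y x = pairR x y := rfl

lemma pairR_sub_left (a b y : Fin d → ℝ) : pairR (a - b) y = pairR a y - pairR b y := by
  simp [pairR, sub_mul, Finset.sum_sub_distrib]

lemma pairR_sum {ι : Type*} (t : Finset ι) (w : ι → ℝ) (z : ι → (Fin d → ℝ)) (y : Fin d → ℝ) :
    pairR (∑ i ∈ t, w i • z i) y = ∑ i ∈ t, w i * pairR (z i) y := by
  simp only [pairR, Finset.sum_apply, Pi.smul_apply, smul_eq_mul, Finset.sum_mul, Finset.mul_sum]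
  rw [Finset.sum_comm]
  simp [mul_assoc]

lemma continuous_pairR (y : Fin d → ℝ) : Continuous fun x : Fin d → ℝ => pairR x y := by
  unfold pairR
  exact continuous_finset_sum _ fun i _ => (continuous_apply i).mul continuous_const

lemma ordP_eq' {P : Set (Fin d → ℝ)} {y x₀ : Fin d → ℝ} (hx₀ : x₀ ∈ P)
    (hmin : ∀ x ∈ P, pairR x₀ y ≤ pairR x y) : (sInf ((fun x => pairR x y) '' P)) = pairR x₀ y := by
  apply le_antisymm
  · exact csInf_le ⟨pairR x₀ y, by rintro r ⟨x, hx, rfl⟩; exact hmin x hx⟩ ⟨x₀, hx₀, rfl⟩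
  · exact le_csInf ⟨_, ⟨x₀, hx₀, rfl⟩⟩ (by rintro r ⟨x, hx, rfl⟩; exact hmin x hx)

lemma pairR_mem_face {s : Set (Fin d → ℝ)} {y x : Fin d → ℝ} {m : ℝ}
    (hx : x ∈ convexHull ℝ s) (hs : ∀ p ∈ s, m ≤ pairR p y) (hxm : pairR x y = m) :
    x ∈ convexHull ℝ {p ∈ s | pairR p y = m} := by
  classical
  rw [_root_.convexHull_eq] at hx
  obtain ⟨ι, t, w, z, hw0, hw1, hz, hx⟩ := hx
  have hxsum : x = ∑ i ∈ t, w i • z i := by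
    rw [← hx, Finset.centerMass_eq_of_sum_1 _ _ hw1]
  have hpair : pairR x y = ∑ i ∈ t, w i * pairR (z i) y := by
    rw [hxsum, pairR_sum]
  have hkey : ∀ i ∈ t, w i * (pairR (z i) y - m) = 0 := by
    have hsum : ∑ i ∈ t, w i * (pairR (z i) y - m) = 0 := by
      have h1 : ∑ i ∈ t, w i * (pairR (z i) y - m)
          = (∑ i ∈ t, w i * pairR (z i) y) - (∑ i ∈ t, w i) * m := by
        rw [Finset.sum_mul, ← Finset.sum_sub_distrib]
        exact Finset.sum_congr rfl fun i _ => by ring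
      rw [h1, hw1, ← hpair, hxm, one_mul, sub_self]
    exact fun i hi => (Finset.sum_eq_zero_iff_of_nonneg fun j hj =>
      mul_nonneg (hw0 j hj) (sub_nonneg.2 (hs _ (hz j hj)))).mp hsum i hi
  have hx' : x = (t.filter fun i => w i ≠ 0).centerMass w z := by
    rw [Finset.centerMass_filter_ne_zero, hx]
  rw [hx']
  apply Finset.centerMass_mem_convexHull
  · exact fun i hi => hw0 i (Finset.mem_filter.mp hi).1
  · rw [Finset.sum_filter_ne_zero, hw1]; exact one_pos
  · intro i hi
    obtain ⟨hit, hwne⟩ := Finset.mem_filter.mp hi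
    refine ⟨hz i hit, ?_⟩
    rcases mul_eq_zero.mp (hkey i hit) with h | h
    · exact absurd h hwne
    · linarith [sub_eq_zero.mp h]

/-- if Δ^{FI} = {0} and Θ is a k-dimensional face of Δ with [Θ*]
nonempty, then [Θ*] is a face of [Δ*] of dimension at most d-1-k. -/
theorem stmt9 {d k : ℕ} (Δ Θ : Set (Fin d → ℝ)) (h1 : IsLatticePolytope Δ)
    (h2 : (interior Δ).Nonempty) (hFI : fineInterior Δ = {0})
    (hΘ : IsFaceOf Δ Θ) (hk : dimSet Θ = k)
    (hne : {x ∈ dualFace Δ Θ | IsLatticePoint x}.Nonempty) :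
    IsFaceOf (latticeHull (polarSet Δ)) (latticeHull (dualFace Δ Θ)) ∧
      dimSet (latticeHull (dualFace Δ Θ)) + k + 1 ≤ d := by
  classical
  obtain ⟨S, hS⟩ := h1
  obtain ⟨y₀, hΘdef⟩ := hΘ
  obtain ⟨ystar, ⟨⟨hyPol, hyΘ⟩, hyLat⟩⟩ := hne
  obtain ⟨p0, hp0i⟩ := h2
  have hp0 : p0 ∈ Δ := interior_subset hp0i
  have hfin : (toR '' (S : Set (Fin d → ℤ))).Finite := S.finite_toSet.image _
  have hcomp : IsCompact Δ := hS ▸ hfin.isCompact_convexHull ℝ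
  obtain ⟨xmin, hxminΔ, hxminmin⟩ :=
    hcomp.exists_isMinOn ⟨p0, hp0⟩ ((continuous_pairR y₀).continuousOn)
  have hmin : ∀ x ∈ Δ, pairR xmin y₀ ≤ pairR x y₀ := fun x hx => hxminmin hx
  have hm0 : ordP Δ y₀ = pairR xmin y₀ := ordP_eq' hxminΔ hmin
  have hxminΘ : xmin ∈ Θ := by rw [hΘdef]; exact ⟨hxminΔ, hm0.symm⟩
  have hΘΔ : Θ ⊆ Δ := by rw [hΘdef]; exact fun x hx => hx.1
  -- face vertices
  set S₀ : Finset (Fin d → ℤ) := S.filter (fun s => pairR (toR s) y₀ = ordP Δ y₀) with hS₀def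
  have hface_eq : {p ∈ toR '' (S : Set (Fin d → ℤ)) | pairR p y₀ = ordP Δ y₀}
      = toR '' (S₀ : Set (Fin d → ℤ)) := by
    ext p
    constructor
    · rintro ⟨⟨s, hs, rfl⟩, hpm⟩
      exact ⟨s, Finset.mem_coe.2 (Finset.mem_filter.2 ⟨hs, hpm⟩), rfl⟩
    · rintro ⟨s, hs, rfl⟩
      obtain ⟨hsS, hsm⟩ := Finset.mem_filter.mp (Finset.mem_coe.mp hs)
      exact ⟨⟨s, hsS, rfl⟩, hsm⟩
  have hSlow : ∀ p ∈ toR '' (S : Set (Fin d → ℤ)), ordP Δ y₀ ≤ pairR p y₀ := by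
    intro p hp
    have hpΔ : p ∈ Δ := hS ▸ subset_convexHull ℝ _ hp
    rw [hm0]; exact hmin p hpΔ
  have hΘhull : Θ ⊆ convexHull ℝ (toR '' (S₀ : Set (Fin d → ℤ))) := by
    intro x hx
    rw [hΘdef] at hx
    have hxΔ : x ∈ convexHull ℝ (toR '' (S : Set (Fin d → ℤ))) := hS ▸ hx.1
    have h := pairR_mem_face hxΔ hSlow hx.2
    rwa [hface_eq] at h
  have hS₀Θ : ∀ s ∈ S₀, toR s ∈ Θ := by
    intro s hs
    obtain ⟨hsS, hsm⟩ := Finset.mem_filter.mp hs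
    rw [hΘdef]
    exact ⟨hS ▸ subset_convexHull ℝ _ ⟨s, hsS, rfl⟩, hsm⟩
  have hS₀ne : S₀.Nonempty := by
    by_contra h
    rw [Finset.not_nonempty_iff_eq_empty] at h
    have h2 := hΘhull hxminΘ
    rw [h] at h2
    simp at h2
  have hN : 0 < ((S₀.card : ℝ)) := by exact_mod_cast Finset.card_pos.mpr hS₀ne
  have hw1 : ∑ _s ∈ S₀, ((S₀.card : ℝ))⁻¹ = 1 := by
    rw [Finset.sum_const, nsmul_eq_mul]
    field_simp
  set v : Fin d → ℝ := S₀.centerMass (fun _ => ((S₀.card : ℝ))⁻¹) toR with hvdef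
  have hvsum : v = ∑ s ∈ S₀, ((S₀.card : ℝ))⁻¹ • toR s :=
    Finset.centerMass_eq_of_sum_1 _ _ hw1
  have hhullΘ : convexHull ℝ (toR '' (S₀ : Set (Fin d → ℤ))) ⊆ Θ := by
    apply convexHull_min
    · rintro p ⟨s, hs, rfl⟩; exact hS₀Θ s hs
    · rw [hΘdef]
      exact (hS ▸ convex_convexHull ℝ _ : Convex ℝ Δ).inter
        (convex_hyperplane (pairLin y₀).isLinear (ordP Δ y₀))
  have hvΘ : v ∈ Θ := by
    apply hhullΘ
    rw [hvdef]
    exact S₀.centerMass_mem_convexHull (fun i _ => by positivity)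
      (by rw [hw1]; exact one_pos) (fun i hi => Set.mem_image_of_mem _ hi)
  have hvΔ : v ∈ Δ := hΘΔ hvΘ
  -- key property of the centroid
  have hK : ∀ p : Fin d → ℝ, (∀ s ∈ S₀, -1 ≤ pairR (toR s) p) → pairR v p = -1 →
      ∀ x ∈ Θ, pairR x p = -1 := by
    intro p hlb hvp
    have hvp' : pairR v p = ∑ s ∈ S₀, ((S₀.card : ℝ))⁻¹ * pairR (toR s) p := by
      rw [hvsum, pairR_sum]
    have hsum0 : ∑ s ∈ S₀, ((S₀.card : ℝ))⁻¹ * (pairR (toR s) p + 1) = 0 := by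
      have h1 : ∑ s ∈ S₀, ((S₀.card : ℝ))⁻¹ * (pairR (toR s) p + 1)
          = (∑ s ∈ S₀, ((S₀.card : ℝ))⁻¹ * pairR (toR s) p) + ∑ _s ∈ S₀, ((S₀.card : ℝ))⁻¹ := by
        rw [← Finset.sum_add_distrib]
        exact Finset.sum_congr rfl fun s _ => by ring
      rw [h1, ← hvp', hvp, hw1]; ring
    have heach : ∀ s ∈ S₀, ((S₀.card : ℝ))⁻¹ * (pairR (toR s) p + 1) = 0 :=
      (Finset.sum_eq_zero_iff_of_nonneg fun s hs =>
        mul_nonneg (by positivity) (by linarith [hlb s hs])).mp hsum0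
    have hS₀p : ∀ s ∈ S₀, pairR (toR s) p = -1 := by
      intro s hs
      rcases mul_eq_zero.mp (heach s hs) with h | h
      · exact absurd h (by positivity)
      · linarith
    intro x hx
    have hsub : convexHull ℝ (toR '' (S₀ : Set (Fin d → ℤ))) ⊆ {z | pairR z p = -1} := by
      apply convexHull_min
      · rintro q ⟨s, hs, rfl⟩; exact hS₀p s hs
      · exact convex_hyperplane (pairLin p).isLinear (-1)
    exact hsub (hΘhull hx)
  -- the polar side
  have hystarL : ystar ∈ {x ∈ polarSet Δ | IsLatticePoint x} := ⟨hyPol, hyLat⟩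
  have hLlb : ∀ z ∈ {x ∈ polarSet Δ | IsLatticePoint x}, -1 ≤ pairR z v := by
    intro z hz
    have h := hz.1 v hvΔ
    rwa [pairR_comm] at h
  have hPlb : ∀ z ∈ latticeHull (polarSet Δ), -1 ≤ pairR z v := by
    intro z hz
    exact convexHull_min hLlb (convex_halfSpace_ge (pairLin v).isLinear (-1)) hz
  have hystarP : ystar ∈ latticeHull (polarSet Δ) := subset_convexHull ℝ _ hystarL
  have hystarv : pairR ystar v = -1 := by rw [pairR_comm]; exact hyΘ v hvΘ
  have hordP : ordP (latticeHull (polarSet Δ)) v = -1 := by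
    have h := ordP_eq' (y := v) hystarP (fun z hz => by rw [hystarv]; exact hPlb z hz)
    rw [hystarv] at h
    exact h
  have hLFL : {x ∈ dualFace Δ Θ | IsLatticePoint x} ⊆ {x ∈ polarSet Δ | IsLatticePoint x} :=
    fun p hp => ⟨hp.1.1, hp.2⟩
  have hFhyp : ∀ x ∈ Θ, ∀ z ∈ latticeHull (dualFace Δ Θ), pairR z x = -1 := by
    intro x hx z hz
    have hsub : latticeHull (dualFace Δ Θ) ⊆ {z | pairR z x = -1} :=
      convexHull_min (fun p hp => by show pairR p x = -1; rw [pairR_comm]; exact hp.1.2 x hx)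
        (convex_hyperplane (pairLin x).isLinear (-1))
    exact hsub hz
  have hFeq : latticeHull (dualFace Δ Θ)
      = {z ∈ latticeHull (polarSet Δ) | pairR z v = ordP (latticeHull (polarSet Δ)) v} := by
    rw [hordP]
    apply Set.Subset.antisymm
    · intro z hz
      exact ⟨convexHull_mono hLFL hz, hFhyp v hvΘ z hz⟩
    · rintro z ⟨hzP, hzv⟩
      have hz' := pairR_mem_face hzP hLlb hzv
      refine convexHull_mono ?_ hz'
      rintro p ⟨⟨hpPol, hpLat⟩, hpv⟩
      refine ⟨⟨hpPol, ?_⟩, hpLat⟩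
      apply hK p
      · intro s hs
        exact hpPol (toR s) (hΘΔ (hS₀Θ s hs))
      · rw [pairR_comm]; exact hpv
  refine ⟨⟨v, hFeq⟩, ?_⟩
  -- dimension bound
  have hk' : Module.finrank ℝ (vectorSpan ℝ Θ) = k := hk
  set U : Submodule ℝ (Fin d → ℝ) := Submodule.span ℝ Θ with hUdef
  have hvsU : vectorSpan ℝ Θ ≤ U := by
    apply Submodule.span_le.mpr
    rintro u ⟨a, ha, b, hb, rfl⟩
    exact Submodule.sub_mem _ (Submodule.subset_span ha) (Submodule.subset_span hb)
  have hvnotin : v ∉ vectorSpan ℝ Θ := by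
    intro hv
    have hker : vectorSpan ℝ Θ ≤ LinearMap.ker (pairLin ystar) := by
      apply Submodule.span_le.mpr
      rintro u ⟨a, ha, b, hb, rfl⟩
      simp only [SetLike.mem_coe, LinearMap.mem_ker]
      show pairR (a - b) ystar = 0
      rw [pairR_sub_left, hyΘ a ha, hyΘ b hb]
      ring
    have h := hker hv
    rw [LinearMap.mem_ker, pairLin_apply, pairR_comm, hystarv] at h
    norm_num at h
  have hUlt : vectorSpan ℝ Θ < U :=
    lt_of_le_of_ne hvsU (fun h => hvnotin (by rw [h]; exact Submodule.subset_span hvΘ))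
  have hkU : k + 1 ≤ Module.finrank ℝ U := by
    have h := Submodule.finrank_lt_finrank_of_lt hUlt
    omega
  -- move to EuclideanSpace
  set e : (Fin d → ℝ) ≃ₗ[ℝ] EuclideanSpace ℝ (Fin d) :=
    (WithLp.linearEquiv 2 ℝ (Fin d → ℝ)).symm with hedef
  have hinner : ∀ x y : Fin d → ℝ, (inner ℝ (e x) (e y) : ℝ) = pairR x y := by
    intro x y
    simp [hedef, PiLp.inner_apply, RCLike.inner_apply, pairR, mul_comm]
  set F := latticeHull (dualFace Δ Θ) with hFdef
  have hVW : ∀ u ∈ U, ∀ wv ∈ vectorSpan ℝ F, pairR u wv = 0 := by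
    intro u hu wv hwv
    have hstep : ∀ x ∈ Θ, pairR wv x = 0 := by
      intro x hx
      have hker : vectorSpan ℝ F ≤ LinearMap.ker (pairLin x) := by
        apply Submodule.span_le.mpr
        rintro u' ⟨a, ha, b, hb, rfl⟩
        simp only [SetLike.mem_coe, LinearMap.mem_ker]
        show pairR (a - b) x = 0
        rw [pairR_sub_left, hFhyp x hx a ha, hFhyp x hx b hb]
        ring
      exact hker hwv
    have hker2 : U ≤ LinearMap.ker (pairLin wv) := by
      apply Submodule.span_le.mpr
      intro x hx
      simp only [SetLike.mem_coe, LinearMap.mem_ker]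
      show pairR x wv = 0
      rw [pairR_comm]
      exact hstep x hx
    exact hker2 hu
  set U' : Submodule ℝ (EuclideanSpace ℝ (Fin d)) := U.map (e : (Fin d → ℝ) →ₗ[ℝ] _) with hU'def
  set V' : Submodule ℝ (EuclideanSpace ℝ (Fin d)) :=
    (vectorSpan ℝ F).map (e : (Fin d → ℝ) →ₗ[ℝ] _) with hV'def
  have hV'le : V' ≤ U'ᗮ := by
    rintro y' hy'
    obtain ⟨wv, hwv, rfl⟩ := Submodule.mem_map.mp hy'
    rw [Submodule.mem_orthogonal]
    rintro u' hu'
    obtain ⟨u, hu, rfl⟩ := Submodule.mem_map.mp hu'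
    exact (hinner u wv).trans (hVW u hu wv hwv)
  have hd : Module.finrank ℝ U' + Module.finrank ℝ U'ᗮ = d := by
    rw [Submodule.finrank_add_finrank_orthogonal]
    exact finrank_euclideanSpace_fin
  have hU'U : Module.finrank ℝ U' = Module.finrank ℝ U := LinearEquiv.finrank_map_eq e U
  have hV'V : Module.finrank ℝ V' = Module.finrank ℝ (vectorSpan ℝ F) :=
    LinearEquiv.finrank_map_eq e _
  have hdimle : Module.finrank ℝ V' ≤ Module.finrank ℝ U'ᗮ := Submodule.finrank_mono hV'le
  have hdimF : dimSet F = Module.finrank ℝ (vectorSpan ℝ F) := rfl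
  omega
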